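/- Define f_full : ℝ⁴ → ℝ by f_full(x, y, p, q) = 45·(1−x) + 5·x + 50·y + (90·x − 45·(1−x))·p + (10·(1−x) − 5·x + 100·(1−y) − 50·y)·q, and f_zero : ℝ⁵ → ℝ by f_zero(x, y, p, q₁, q₂) = 45·(1−x) + 5·x + 50·y + (90·x − 45·(1−x))·p + (10·(1−x) − 5·x)·q₁ + (100·(1−y) − 50·y)·q₂. Then the supremum over (x, y) ∈ [0,1]² of the infimum over (p, q) ∈ [1/10, 9/10]² of f_full(x, y, p, q) is strictly greater than the supremum over (x, y) ∈ [0,1]² of the infimum over (p, q₁, q₂) ∈ [1/10, 9/10]³ of f_zero(x, y, p, q₁, q₂); in particular the two optimal values differ (200/3 > 131/2). -/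

import Mathlib

noncomputable def fFull (x y p q : ℝ) : ℝ :=
  45 * (1 - x) + 5 * x + 50 * y + (90 * x - 45 * (1 - x)) * p
    + (10 * (1 - x) - 5 * x + 100 * (1 - y) - 50 * y) * q

noncomputable def fZero (x y p q₁ q₂ : ℝ) : ℝ :=
  45 * (1 - x) + 5 * x + 50 * y + (90 * x - 45 * (1 - x)) * p
    + (10 * (1 - x) - 5 * x) * q₁ + (100 * (1 - y) - 50 * y) * q₂

theorem stickiness_matters :
    sSup {v : ℝ | ∃ x ∈ Set.Icc (0 : ℝ) 1, ∃ y ∈ Set.Icc (0 : ℝ) 1,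
        v = sInf {w : ℝ | ∃ p ∈ Set.Icc (1/10 : ℝ) (9/10), ∃ q ∈ Set.Icc (1/10 : ℝ) (9/10),
          w = fFull x y p q}}
      >
    sSup {v : ℝ | ∃ x ∈ Set.Icc (0 : ℝ) 1, ∃ y ∈ Set.Icc (0 : ℝ) 1,
        v = sInf {w : ℝ | ∃ p ∈ Set.Icc (1/10 : ℝ) (9/10), ∃ q₁ ∈ Set.Icc (1/10 : ℝ) (9/10),
          ∃ q₂ ∈ Set.Icc (1/10 : ℝ) (9/10), w = fZero x y p q₁ q₂}} := by
  have hRHS : sSup {v : ℝ | ∃ x ∈ Set.Icc (0 : ℝ) 1, ∃ y ∈ Set.Icc (0 : ℝ) 1,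
        v = sInf {w : ℝ | ∃ p ∈ Set.Icc (1/10 : ℝ) (9/10), ∃ q₁ ∈ Set.Icc (1/10 : ℝ) (9/10),
          ∃ q₂ ∈ Set.Icc (1/10 : ℝ) (9/10), w = fZero x y p q₁ q₂}} ≤ 131/2 := by
    apply Real.sSup_le
    · rintro v ⟨x, ⟨hx0, hx1⟩, y, ⟨hy0, hy1⟩, rfl⟩
      set p : ℝ := if (1:ℝ)/3 ≤ x then 1/10 else 9/10 with hp
      set q₁ : ℝ := if x ≤ (2:ℝ)/3 then 1/10 else 9/10 with hq₁
      set q₂ : ℝ := if y ≤ (2:ℝ)/3 then 1/10 else 9/10 with hq₂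
      have hpm : p ∈ Set.Icc (1/10 : ℝ) (9/10) := by
        rw [hp]; split_ifs <;> norm_num
      have hq₁m : q₁ ∈ Set.Icc (1/10 : ℝ) (9/10) := by
        rw [hq₁]; split_ifs <;> norm_num
      have hq₂m : q₂ ∈ Set.Icc (1/10 : ℝ) (9/10) := by
        rw [hq₂]; split_ifs <;> norm_num
      have hbdd : BddBelow {w : ℝ | ∃ p ∈ Set.Icc (1/10 : ℝ) (9/10),
          ∃ q₁ ∈ Set.Icc (1/10 : ℝ) (9/10), ∃ q₂ ∈ Set.Icc (1/10 : ℝ) (9/10),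
          w = fZero x y p q₁ q₂} := by
        refine ⟨-300, ?_⟩
        rintro w ⟨p', ⟨hp0, hp1⟩, q₁', ⟨hq10, hq11⟩, q₂', ⟨hq20, hq21⟩, rfl⟩
        unfold fZero
        have h1 : (0:ℝ) ≤ p' := by linarith
        have h2 : (0:ℝ) ≤ q₁' := by linarith
        have h3 : (0:ℝ) ≤ q₂' := by linarith
        nlinarith [mul_nonneg hx0 h1, mul_nonneg hy0 h3, mul_nonneg hx0 h2,
          mul_le_one₀ hx1 h1 (hp1.trans (by norm_num)), mul_le_one₀ hy1 h3 (hq21.trans (by norm_num)), mul_le_one₀ hx1 h2 (hq11.trans (by norm_num))]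
      have h1 : sInf {w : ℝ | ∃ p ∈ Set.Icc (1/10 : ℝ) (9/10),
          ∃ q₁ ∈ Set.Icc (1/10 : ℝ) (9/10), ∃ q₂ ∈ Set.Icc (1/10 : ℝ) (9/10),
          w = fZero x y p q₁ q₂} ≤ fZero x y p q₁ q₂ :=
        csInf_le hbdd ⟨p, hpm, q₁, hq₁m, q₂, hq₂m, rfl⟩
      refine h1.trans ?_
      unfold fZero
      rw [hp, hq₁, hq₂]
      split_ifs with h1 h2 h3 h3 h2 h3 h3 <;> (try push_neg at *) <;> nlinarith
    · norm_num
  have hLHS : (200/3 : ℝ) ≤ sSup {v : ℝ | ∃ x ∈ Set.Icc (0 : ℝ) 1, ∃ y ∈ Set.Icc (0 : ℝ) 1,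
        v = sInf {w : ℝ | ∃ p ∈ Set.Icc (1/10 : ℝ) (9/10), ∃ q ∈ Set.Icc (1/10 : ℝ) (9/10),
          w = fFull x y p q}} := by
    apply le_csSup
    · refine ⟨200, ?_⟩
      rintro v ⟨x, ⟨hx0, hx1⟩, y, ⟨hy0, hy1⟩, rfl⟩
      have hbdd : BddBelow {w : ℝ | ∃ p ∈ Set.Icc (1/10 : ℝ) (9/10),
          ∃ q ∈ Set.Icc (1/10 : ℝ) (9/10), w = fFull x y p q} := by
        refine ⟨-300, ?_⟩
        rintro w ⟨p', ⟨hp0, hp1⟩, q', ⟨hq0, hq1⟩, rfl⟩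
        unfold fFull
        have h1 : (0:ℝ) ≤ p' := by linarith
        have h2 : (0:ℝ) ≤ q' := by linarith
        nlinarith [mul_nonneg hx0 h1, mul_nonneg hy0 h2, mul_nonneg hx0 h2,
          mul_le_one₀ hx1 h1 (hp1.trans (by norm_num)), mul_le_one₀ hy1 h2 (hq1.trans (by norm_num)), mul_le_one₀ hx1 h2 (hq1.trans (by norm_num))]
      have h1 : sInf {w : ℝ | ∃ p ∈ Set.Icc (1/10 : ℝ) (9/10),
          ∃ q ∈ Set.Icc (1/10 : ℝ) (9/10), w = fFull x y p q}
          ≤ fFull x y (1/10) (1/10) :=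
        csInf_le hbdd ⟨1/10, by norm_num, 1/10, by norm_num, rfl⟩
      refine h1.trans ?_
      unfold fFull
      nlinarith
    · refine ⟨1/3, by norm_num, 7/10, by norm_num, ?_⟩
      have : {w : ℝ | ∃ p ∈ Set.Icc (1/10 : ℝ) (9/10), ∃ q ∈ Set.Icc (1/10 : ℝ) (9/10),
          w = fFull (1/3) (7/10) p q} = {(200/3 : ℝ)} := by
        ext w
        constructor
        · rintro ⟨p, hp, q, hq, rfl⟩
          unfold fFull
          norm_num
        · rintro rfl
          exact ⟨1/10, by norm_num, 1/10, by norm_num, by unfold fFull; norm_num⟩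
      rw [this, csInf_singleton]
  linarith
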